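/- Let n ≥ 1 be a natural number, let α be real with 0 < α < π, and let z be a real number such that sin(n·arctan z − α) ≠ 0. Then (cot α + i)(1 − iz)^n − (cot α − i)(1 + iz)^n ≠ 0 and cot(n·arctan z − α) = −i · ((cot α + i)(1 − iz)^n + (cot α − i)(1 + iz)^n) / ((cot α + i)(1 − iz)^n − (cot α − i)(1 + iz)^n), where the right-hand side is a complex expression whose value is the real number on the left. -/

import Mathlib

theorem stmt_8 (n : ℕ) (hn : 1 ≤ n) (α : ℝ) (hα0 : 0 < α) (hαπ : α < Real.pi) (z : ℝ)
    (hs : Real.sin (n * Real.arctan z - α) ≠ 0) :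
    ((Real.cot α : ℂ) + Complex.I) * (1 - Complex.I * z) ^ n -
        ((Real.cot α : ℂ) - Complex.I) * (1 + Complex.I * z) ^ n ≠ 0 ∧
    ((Real.cot (n * Real.arctan z - α) : ℂ)) =
      -Complex.I *
        (((Real.cot α : ℂ) + Complex.I) * (1 - Complex.I * z) ^ n +
            ((Real.cot α : ℂ) - Complex.I) * (1 + Complex.I * z) ^ n) /
        (((Real.cot α : ℂ) + Complex.I) * (1 - Complex.I * z) ^ n -
            ((Real.cot α : ℂ) - Complex.I) * (1 + Complex.I * z) ^ n) := by
  have hsα : Real.sin α ≠ 0 := ne_of_gt (Real.sin_pos_of_pos_of_lt_pi hα0 hαπ)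
  set θ : ℝ := n * Real.arctan z - α with hθ
  set r : ℝ := Real.sqrt (1 + z ^ 2) with hrdef
  have hr : (0:ℝ) < r := Real.sqrt_pos.2 (by positivity)
  have hrC : (r : ℂ) ≠ 0 := by exact_mod_cast hr.ne'
  have hsC : (Real.sin α : ℂ) ≠ 0 := by exact_mod_cast hsα
  -- 1 + I z = r * exp(arctan z * I)
  have h1 : (1 + Complex.I * (z:ℂ)) = (r : ℂ) * Complex.exp (Real.arctan z * Complex.I) := by
    rw [Complex.exp_mul_I, ← Complex.ofReal_cos, ← Complex.ofReal_sin,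
      Real.cos_arctan, Real.sin_arctan]
    push_cast
    field_simp
    rw [← hrdef]; linear_combination -(Complex.I * z + 1) * mul_inv_cancel₀ hrC
  have h2 : (1 - Complex.I * (z:ℂ)) = (r : ℂ) * Complex.exp (-(Real.arctan z) * Complex.I) := by
    rw [Complex.exp_mul_I, Complex.cos_neg, Complex.sin_neg, ← Complex.ofReal_cos,
      ← Complex.ofReal_sin, Real.cos_arctan, Real.sin_arctan]
    push_cast
    field_simp
    rw [← hrdef]; linear_combination -(1 - Complex.I * z) * mul_inv_cancel₀ hrC
  -- cot α ± I
  have hc : (Real.cot α : ℂ) = (Real.cos α : ℂ) / (Real.sin α : ℂ) := by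
    rw [Real.cot_eq_cos_div_sin]; push_cast; ring
  have hsC2 : Complex.sin (α : ℂ) ≠ 0 := by rw [← Complex.ofReal_sin]; exact hsC
  have hA : ((Real.cot α : ℂ) + Complex.I) = Complex.exp (α * Complex.I) / (Real.sin α : ℂ) := by
    rw [Complex.exp_mul_I, ← Complex.ofReal_cos, ← Complex.ofReal_sin, hc]
    field_simp
  have hB : ((Real.cot α : ℂ) - Complex.I) = Complex.exp (-α * Complex.I) / (Real.sin α : ℂ) := by
    rw [Complex.exp_mul_I, Complex.cos_neg, Complex.sin_neg, ← Complex.ofReal_cos,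
      ← Complex.ofReal_sin, hc]
    field_simp
    ring
  have hpow1 : (1 + Complex.I * (z:ℂ)) ^ n = (r:ℂ) ^ n * Complex.exp ((n * Real.arctan z : ℝ) * Complex.I) := by
    rw [h1, mul_pow, ← Complex.exp_nat_mul]
    push_cast; ring_nf
  have hpow2 : (1 - Complex.I * (z:ℂ)) ^ n = (r:ℂ) ^ n * Complex.exp (-(n * Real.arctan z : ℝ) * Complex.I) := by
    rw [h2, mul_pow, ← Complex.exp_nat_mul]
    push_cast; ring_nf
  have hAterm : ((Real.cot α : ℂ) + Complex.I) * (1 - Complex.I * z) ^ n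
      = (r:ℂ)^n / (Real.sin α : ℂ) * Complex.exp (-(θ:ℂ) * Complex.I) := by
    have he : Complex.exp ((α:ℂ) * Complex.I) *
        Complex.exp (-((n * Real.arctan z : ℝ):ℂ) * Complex.I) = Complex.exp (-(θ:ℂ) * Complex.I) := by
      rw [← Complex.exp_add]; congr 1; push_cast [hθ]; ring
    rw [hA, hpow2, ← he]; ring
  have hBterm : ((Real.cot α : ℂ) - Complex.I) * (1 + Complex.I * z) ^ n
      = (r:ℂ)^n / (Real.sin α : ℂ) * Complex.exp ((θ:ℂ) * Complex.I) := by
    have he : Complex.exp (-(α:ℂ) * Complex.I) *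
        Complex.exp (((n * Real.arctan z : ℝ):ℂ) * Complex.I) = Complex.exp ((θ:ℂ) * Complex.I) := by
      rw [← Complex.exp_add]; congr 1; push_cast [hθ]; ring
    rw [hB, hpow1, ← he]; ring
  have hsinθ : Complex.sin (θ:ℂ) = ((Real.sin θ : ℝ) : ℂ) := (Complex.ofReal_sin θ).symm
  have hcosθ : Complex.cos (θ:ℂ) = ((Real.cos θ : ℝ) : ℂ) := (Complex.ofReal_cos θ).symm
  have hdiff : ((Real.cot α : ℂ) + Complex.I) * (1 - Complex.I * z) ^ n -
      ((Real.cot α : ℂ) - Complex.I) * (1 + Complex.I * z) ^ n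
      = (r:ℂ)^n / (Real.sin α : ℂ) * (-2 * Complex.I * Complex.sin (θ:ℂ)) := by
    rw [hAterm, hBterm, Complex.sin]
    linear_combination ((r:ℂ)^n / (Real.sin α : ℂ)) *
      (Complex.exp (-(θ:ℂ) * Complex.I) - Complex.exp ((θ:ℂ) * Complex.I)) * Complex.I_sq
  have hsum : ((Real.cot α : ℂ) + Complex.I) * (1 - Complex.I * z) ^ n +
      ((Real.cot α : ℂ) - Complex.I) * (1 + Complex.I * z) ^ n
      = (r:ℂ)^n / (Real.sin α : ℂ) * (2 * Complex.cos (θ:ℂ)) := by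
    rw [hAterm, hBterm, Complex.cos]
    ring
  have hsθC : Complex.sin (θ:ℂ) ≠ 0 := by rw [hsinθ]; exact_mod_cast hs
  have hrn : ((r:ℂ))^n ≠ 0 := pow_ne_zero _ hrC
  constructor
  · rw [hdiff]
    apply mul_ne_zero (div_ne_zero hrn hsC)
    apply mul_ne_zero (mul_ne_zero (by norm_num) Complex.I_ne_zero) hsθC
  · rw [hdiff, hsum]
    have hcot : (Real.cot θ : ℂ) = Complex.cos (θ:ℂ) / Complex.sin (θ:ℂ) := by
      rw [hsinθ, hcosθ, Real.cot_eq_cos_div_sin]; push_cast; ring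
    have hcn : (r:ℂ)^n / (Real.sin α : ℂ) ≠ 0 := div_ne_zero hrn hsC
    have hden : (r:ℂ)^n / (Real.sin α : ℂ) * (-2 * Complex.I * Complex.sin (θ:ℂ)) ≠ 0 :=
      mul_ne_zero hcn (mul_ne_zero (mul_ne_zero (by norm_num) Complex.I_ne_zero) hsθC)
    rw [hcot, div_eq_div_iff hsθC hden]
    ring
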